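/- arXiv:1810.01023 — 9 statements merged into one kernel-verified Lean document; each statement's English description precedes it below -/
import Mathlib

section
/- Let C be a category and consider a commutative square q ∘ π₁ = p ∘ π₂, where π₁ : P → X, π₂ : P → Y, q : X → B, p : Y → B, and assume the square is a pullback square. If π₁ is an isomorphism, π₂ is an epimorphism, and q is a regular epimorphism (i.e. q is a coequalizer of some pair of morphisms), then p is an isomorphism. -/
open CategoryTheory

/-- In any category, given a pullback square `q ∘ π₁ = p ∘ π₂`, if `π₁` is an
isomorphism, `π₂` is an epimorphism and `q` is a regular epimorphism (a
coequalizer of some pair of morphisms), then `p` is an isomorphism.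
(Lemma 2.3 of the paper, for locales.) -/
theorem isIso_of_isPullback_of_isIso_fst {C : Type*} [Category C]
    {P X Y B : C} (π₁ : P ⟶ X) (π₂ : P ⟶ Y) (q : X ⟶ B) (p : Y ⟶ B)
    (hpb : IsPullback π₁ π₂ q p)
    (h₁ : IsIso π₁) (h₂ : Epi π₂) (h₃ : RegularEpi q) :
    IsIso p := by
  haveI := h₃
  set t : X ⟶ Y := inv π₁ ≫ π₂ with ht
  have hw : h₃.left ≫ q = h₃.right ≫ q := h₃.w
  -- show left ≫ t = right ≫ t using pullback uniqueness
  have hcomm : ∀ (f : h₃.W ⟶ X), f ≫ t ≫ p = f ≫ q := by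
    intro f
    rw [ht]
    simp [← hpb.w]
  have hlt : h₃.left ≫ t = h₃.right ≫ t := by
    have hq : h₃.left ≫ q = (h₃.right ≫ t) ≫ p := by
      rw [hw, Category.assoc, hcomm]
    set l := hpb.lift h₃.left (h₃.right ≫ t) hq with hldef
    have hl1 : l ≫ π₁ = h₃.left := hpb.lift_fst _ _ hq
    have hl2 : l ≫ π₂ = h₃.right ≫ t := hpb.lift_snd _ _ hq
    have hleq : l = h₃.left ≫ inv π₁ := by
      rw [← hl1]; simp
    rw [← hl2, hleq, ht]; simp
  obtain ⟨s, hs⟩ := Limits.Cofork.IsColimit.desc' h₃.isColimit t hlt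
  have hs : q ≫ s = t := hs
  refine ⟨s, ?_, ?_⟩
  · -- p ≫ s = 𝟙 Y, use that π₂ is epi
    rw [← cancel_epi π₂]
    have : π₂ ≫ p ≫ s = π₁ ≫ q ≫ s := by rw [← Category.assoc, ← hpb.w, Category.assoc]
    rw [this, hs, ht]
    simp
  · -- s ≫ p = 𝟙 B, use that q is epi
    haveI : Epi q := h₃.epi
    rw [← cancel_epi q, ← Category.assoc, hs]
    simp [ht, ← hpb.w]
end

section
/- Let A, B, C, D be frames and let f* : D → B, g* : C → A, h* : B → A, j* : D → C be frame homomorphisms (maps preserving arbitrary suprema and finite meets, including the top element) with g* ∘ j* = h* ∘ f*. Assume: f* has a left adjoint f_! : B → D satisfying the Frobenius condition f_!(b ∧ f*(d)) = f_!(b) ∧ d for all b ∈ B, d ∈ D; h* has a left adjoint h_! : A → B satisfying the Frobenius condition h_!(a ∧ h*(b)) = h_!(a) ∧ b for all a ∈ A, b ∈ B; g* has a left adjoint g_! : A → C; f and g are surjections in the sense that f_! ∘ f* = id_D and g_! ∘ g* = id_C; and the Beck–Chevalley condition j* ∘ f_! = g_! ∘ h* holds. Then the map j_! := f_! ∘ h_!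 ∘ g* : C → D is left adjoint to j* and satisfies the Frobenius condition j_!(c ∧ j*(d)) = j_!(c) ∧ d for all c ∈ C, d ∈ D. -/
/-- Lemma 2.2 of the paper, at the level of frames. Given frame homomorphisms
`f* : D → B`, `g* : C → A`, `h* : B → A`, `j* : D → C` with
`g* ∘ j* = h* ∘ f*`, where `f*` and `h*` have left adjoints satisfying the
Frobenius condition, `g*` has a left adjoint, `f` and `g` are surjections
(`f_! ∘ f* = id`, `g_! ∘ g* = id`), and the Beck–Chevalley condition
`j* ∘ f_! = g_! ∘ h*` holds, the map `j_! := f_! ∘ h_! ∘ g*` is left adjoint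
to `j*` and satisfies the Frobenius condition; i.e. `j` is an open map. -/
theorem open_of_pullback_of_open_surjections
    {A B C D : Type*} [Order.Frame A] [Order.Frame B] [Order.Frame C] [Order.Frame D]
    (fs : FrameHom D B) (gs : FrameHom C A) (hs : FrameHom B A) (js : FrameHom D C)
    (hcomm : ∀ d : D, gs (js d) = hs (fs d))
    (fshr : B → D) (hf_adj : ∀ (b : B) (d : D), fshr b ≤ d ↔ b ≤ fs d)
    (hf_frob : ∀ (b : B) (d : D), fshr (b ⊓ fs d) = fshr b ⊓ d)
    (hshr : A → B) (hh_adj : ∀ (a : A) (b : B), hshr a ≤ b ↔ a ≤ hs b)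
    (hh_frob : ∀ (a : A) (b : B), hshr (a ⊓ hs b) = hshr a ⊓ b)
    (gshr : A → C) (hg_adj : ∀ (a : A) (c : C), gshr a ≤ c ↔ a ≤ gs c)
    (hf_surj : ∀ d : D, fshr (fs d) = d)
    (hg_surj : ∀ c : C, gshr (gs c) = c)
    (hBC : ∀ b : B, js (fshr b) = gshr (hs b)) :
    (∀ (c : C) (d : D), fshr (hshr (gs c)) ≤ d ↔ c ≤ js d) ∧
      (∀ (c : C) (d : D), fshr (hshr (gs (c ⊓ js d))) = fshr (hshr (gs c)) ⊓ d) := by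
  constructor
  · intro c d
    rw [hf_adj, hh_adj, ← hcomm]
    constructor
    · intro h
      calc c = gshr (gs c) := (hg_surj c).symm
        _ ≤ gshr (gs (js d)) := (hg_adj _ _).2 (le_trans h ((hg_adj _ _).1 le_rfl))
        _ = js d := hg_surj _
    · intro h
      exact OrderHomClass.mono gs h
  · intro c d
    have : gs (c ⊓ js d) = gs c ⊓ hs (fs d) := by rw [map_inf, hcomm]
    rw [this, hh_frob, hf_frob]
end

section
/- Let C be a category and consider a commutative square g ∘ q₁ = q₂ ∘ f, where f : X₁ → X₂, q₁ : X₁ → M₁, q₂ : X₂ → M₂, g : M₁ → M₂, and assume the square is a pullback square. If q₁ is an epimorphism and q₂ is a regular epimorphism (a coequalizer of some pair of morphisms), then f is an isomorphism if and only if g is an isomorphism. -/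
open CategoryTheory CategoryTheory.Limits

/-- In any category, given a pullback square `g ∘ q₁ = q₂ ∘ f`, if `q₁` is an
epimorphism and `q₂` is a regular epimorphism (a coequalizer of some pair),
then `f` is an isomorphism iff `g` is an isomorphism.
(Lemma 3.3 of the paper, for principal bundles of open groupoids.) -/
theorem isIso_iff_isIso_of_isPullback {C : Type*} [Category C]
    {X₁ X₂ M₁ M₂ : C} (f : X₁ ⟶ X₂) (q₁ : X₁ ⟶ M₁) (q₂ : X₂ ⟶ M₂) (g : M₁ ⟶ M₂)
    (hpb : IsPullback f q₁ q₂ g)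
    (h₁ : Epi q₁) (h₂ : RegularEpi q₂) :
    IsIso f ↔ IsIso g := by
  constructor
  · intro hf
    -- candidate section of `g` defined on `X₂`
    set s : X₂ ⟶ M₁ := inv f ≫ q₁ with hs
    have hsg : s ≫ g = q₂ := by
      rw [hs, Category.assoc, ← hpb.w, ← Category.assoc, IsIso.inv_hom_id,
        Category.id_comp]
    -- `s` coequalizes the pair coequalized by `q₂`
    have w' : h₂.left ≫ q₂ = (h₂.right ≫ s) ≫ g := by
      rw [Category.assoc, hsg, h₂.w]
    have hℓ : hpb.lift h₂.left (h₂.right ≫ s) w' = h₂.left ≫ inv f := by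
      rw [← cancel_mono f, Category.assoc, IsIso.inv_hom_id, Category.comp_id,
        hpb.lift_fst]
    have hcoeq : h₂.left ≫ s = h₂.right ≫ s := by
      have := hpb.lift_snd h₂.left (h₂.right ≫ s) w'
      rw [hℓ] at this
      rw [← this, hs, Category.assoc]
    -- descend `s` to an inverse of `g`
    let g' : M₂ ⟶ M₁ := Cofork.IsColimit.desc h₂.isColimit s hcoeq
    have hq : q₂ ≫ g' = s := Cofork.IsColimit.π_desc' h₂.isColimit s hcoeq
    refine ⟨g', ?_, ?_⟩
    · -- g ≫ g' = 𝟙 M₁, using that q₁ is epi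
      rw [← cancel_epi q₁, ← Category.assoc, ← hpb.w, Category.assoc, hq, hs,
        ← Category.assoc, IsIso.hom_inv_id, Category.id_comp, Category.comp_id]
    · -- g' ≫ g = 𝟙 M₂, using that q₂ is epi
      have : Epi q₂ := RegularEpi.epi q₂ h₂
      rw [← cancel_epi q₂, ← Category.assoc, hq, hsg, Category.comp_id]
  · intro hg
    -- inverse of `f` via the pullback lift of `(𝟙 X₂, q₂ ≫ g⁻¹)`
    have w : 𝟙 X₂ ≫ q₂ = (q₂ ≫ inv g) ≫ g := by simp
    refine ⟨hpb.lift (𝟙 X₂) (q₂ ≫ inv g) w, ?_, hpb.lift_fst _ _ _⟩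
    apply hpb.hom_ext
    · rw [Category.assoc, hpb.lift_fst, Category.comp_id, Category.id_comp]
    · rw [Category.assoc, hpb.lift_snd, Category.id_comp, ← Category.assoc,
        hpb.w, Category.assoc, IsIso.hom_inv_id, Category.comp_id]
end

section
/- Let Q be a based groupoid quantale over a frame A, and let X be a stably supported Q-module. Then for every x ∈ X one has ς_X(x) = ς_Q(⟨x,x⟩) = ς_Q(⟨x,1_X⟩). -/
/-- A based groupoid quantale over a frame `A`: a frame `Q` (with top `1_Q`)
equipped with a sup-preserving associative multiplication, an involution,
unital left/right `A`-actions and an equivariant support `ς_Q : Q → A`. -/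
structure BasedGroupoidQuantale (A : Type*) (Q : Type*)
    [Order.Frame A] [Order.Frame Q] where
  mul : Q → Q → Q
  star : Q → Q
  lres : A → Q → Q          -- `a ▹ q`
  rres : Q → A → Q          -- `q ◃ a`
  suppQ : Q → A             -- `ς_Q`
  mul_assoc : ∀ p q r, mul (mul p q) r = mul p (mul q r)
  mul_sSup_left : ∀ (S : Set Q) (q : Q), mul (sSup S) q = ⨆ p ∈ S, mul p q
  mul_sSup_right : ∀ (p : Q) (S : Set Q), mul p (sSup S) = ⨆ q ∈ S, mul p q
  star_star : ∀ q, star (star q) = q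
  star_mul : ∀ p q, star (mul p q) = mul (star q) (star p)
  star_sSup : ∀ (S : Set Q), star (sSup S) = ⨆ q ∈ S, star q
  lres_top_act : ∀ q, lres ⊤ q = q
  rres_top_act : ∀ q, rres q ⊤ = q
  lres_sSup_left : ∀ (S : Set A) (q : Q), lres (sSup S) q = ⨆ a ∈ S, lres a q
  lres_sSup_right : ∀ (a : A) (S : Set Q), lres a (sSup S) = ⨆ q ∈ S, lres a q
  rres_sSup_left : ∀ (S : Set Q) (a : A), rres (sSup S) a = ⨆ q ∈ S, rres q a
  rres_sSup_right : ∀ (q : Q) (S : Set A), rres q (sSup S) = ⨆ a ∈ S, rres q a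
  lres_lres : ∀ a b q, lres a (lres b q) = lres (a ⊓ b) q
  lres_rres_comm : ∀ a q b, rres (lres a q) b = lres a (rres q b)
  lres_mul : ∀ a p q, mul (lres a p) q = lres a (mul p q)
  rres_mul : ∀ p a q, mul (rres p a) q = mul p (lres a q)
  mul_rres : ∀ p q a, rres (mul p q) a = mul p (rres q a)
  star_lres_rres : ∀ a q b, star (lres a (rres q b)) = lres b (rres (star q) a)
  lres_inf : ∀ a q m, lres a q ⊓ m = lres a (q ⊓ m)
  inf_rres : ∀ m q a, m ⊓ rres q a = rres (q ⊓ m) a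
  suppQ_sSup : ∀ (S : Set Q), suppQ (sSup S) = ⨆ q ∈ S, suppQ q
  suppQ_top : suppQ ⊤ = ⊤
  suppQ_le_mul : ∀ q p, lres (suppQ q) p ≤ mul (mul q (star q)) p
  suppQ_lres : ∀ q, lres (suppQ q) q = q
  suppQ_equivariant : ∀ a q, suppQ (lres a q) = a ⊓ suppQ q

/-- A pre-Hilbert `Q`-module: a frame `X` (with top `1_X`) with a sup-preserving
`Q`-action and a unital left `A`-action, equipped with an inner product. -/
structure PreHilbertModule {A Q : Type*} [Order.Frame A] [Order.Frame Q]
    (GQ : BasedGroupoidQuantale A Q) (X : Type*) [Order.Frame X] where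
  smul : Q → X → X          -- `q · x`
  lres : A → X → X          -- `a ▹ x`
  inner : X → X → Q         -- `⟨x, y⟩`
  smul_sSup_left : ∀ (S : Set Q) (x : X), smul (sSup S) x = ⨆ q ∈ S, smul q x
  smul_sSup_right : ∀ (q : Q) (S : Set X), smul q (sSup S) = ⨆ x ∈ S, smul q x
  mul_smul : ∀ p q x, smul (GQ.mul p q) x = smul p (smul q x)
  lres_top_act : ∀ x, lres ⊤ x = x
  lres_sSup_left : ∀ (S : Set A) (x : X), lres (sSup S) x = ⨆ a ∈ S, lres a x
  lres_sSup_right : ∀ (a : A) (S : Set X), lres a (sSup S) = ⨆ x ∈ S, lres a x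
  lres_lres : ∀ a b x, lres a (lres b x) = lres (a ⊓ b) x
  lresQ_smul : ∀ a q x, smul (GQ.lres a q) x = lres a (smul q x)
  rresQ_smul : ∀ q a x, smul (GQ.rres q a) x = smul q (lres a x)
  lres_inf : ∀ a (x y : X), lres a (x ⊓ y) = lres a x ⊓ y
  inner_smul : ∀ q x y, inner (smul q x) y = GQ.mul q (inner x y)
  lres_inner : ∀ a x, GQ.lres a (inner x ⊤) = inner (lres a x) ⊤
  inner_sSup : ∀ (S : Set X) (y : X), inner (sSup S) y = ⨆ x ∈ S, inner x y
  inner_star : ∀ x y, inner x y = GQ.star (inner y x)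

/-- Theorem 4.1 (first assertion): for a stably supported `Q`-module `X`,
`ς_X(x) = ς_Q(⟨x,x⟩) = ς_Q(⟨x,1_X⟩)` for every `x ∈ X`. -/
theorem stably_supported_supp_eq {A Q X : Type*}
    [Order.Frame A] [Order.Frame Q] [Order.Frame X]
    (GQ : BasedGroupoidQuantale A Q) (M : PreHilbertModule GQ X)
    (hQ_stable : ∀ p q : Q, GQ.suppQ (GQ.mul p q) ≤ GQ.suppQ p)
    (ς : X → A) (hmono : Monotone ς) (hς_top : ς ⊤ = ⊤)
    (hς_le : ∀ x, M.lres (ς x) ⊤ ≤ M.smul (M.inner x x) ⊤)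
    (hς_restrict : ∀ x, M.lres (ς x) x = x)
    (hς_stable : ∀ (q : Q) (x : X), ς (M.smul q x) ≤ GQ.suppQ q) :
    ∀ x : X, ς x = GQ.suppQ (M.inner x x) ∧ ς x = GQ.suppQ (M.inner x ⊤) := by
  -- monotonicity helpers
  have hsuppQ_mono : Monotone GQ.suppQ := by
    intro p q hpq
    have h := GQ.suppQ_sSup {p, q}
    rw [sSup_pair, sup_eq_right.mpr hpq] at h
    rw [h]
    exact le_iSup₂ (f := fun r _ => GQ.suppQ r) p (Set.mem_insert p {q})
  have hstar_mono : Monotone GQ.star := by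
    intro p q hpq
    have h := GQ.star_sSup {p, q}
    rw [sSup_pair, sup_eq_right.mpr hpq] at h
    rw [h]
    exact le_iSup₂ (f := fun r _ => GQ.star r) p (Set.mem_insert p {q})
  have hinner_mono : ∀ (x y z : X), x ≤ y → M.inner x z ≤ M.inner y z := by
    intro x y z hxy
    have h := M.inner_sSup {x, y} z
    rw [sSup_pair, sup_eq_right.mpr hxy] at h
    rw [h]
    exact le_iSup₂ (f := fun w _ => M.inner w z) x (Set.mem_insert x {y})
  have hlresX_mono : ∀ (a : A) (x y : X), x ≤ y → M.lres a x ≤ M.lres a y := by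
    intro a x y hxy
    have h := M.lres_sSup_right a {x, y}
    rw [sSup_pair, sup_eq_right.mpr hxy] at h
    rw [h]
    exact le_iSup₂ (f := fun w _ => M.lres a w) x (Set.mem_insert x {y})
  intro x
  -- ς_Q⟨x,1⟩ ≤ ς x
  have h1 : GQ.suppQ (M.inner x ⊤) ≤ ς x := by
    have e : M.inner x ⊤ = GQ.lres (ς x) (M.inner x ⊤) := by
      conv_lhs => rw [← hς_restrict x]
      exact (M.lres_inner (ς x) x).symm
    calc GQ.suppQ (M.inner x ⊤)
        = GQ.suppQ (GQ.lres (ς x) (M.inner x ⊤)) := by conv_lhs => rw [e]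
      _ = ς x ⊓ GQ.suppQ (M.inner x ⊤) := GQ.suppQ_equivariant _ _
      _ ≤ ς x := inf_le_left
  -- ς x ≤ ς_Q⟨x,x⟩
  have h3 : ς x ≤ GQ.suppQ (M.inner x x) := by
    have hx_le : x ≤ M.lres (ς x) ⊤ := by
      conv_lhs => rw [← hς_restrict x]
      exact hlresX_mono _ _ _ le_top
    calc ς x ≤ ς (M.lres (ς x) ⊤) := hmono hx_le
      _ ≤ ς (M.smul (M.inner x x) ⊤) := hmono (hς_le x)
      _ ≤ GQ.suppQ (M.inner x x) := hς_stable _ _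
  -- ς_Q⟨x,x⟩ ≤ ς_Q⟨x,1⟩
  have h2 : GQ.suppQ (M.inner x x) ≤ GQ.suppQ (M.inner x ⊤) := by
    refine hsuppQ_mono ?_
    rw [M.inner_star x x, M.inner_star x ⊤]
    exact hstar_mono (hinner_mono _ _ _ le_top)
  exact ⟨le_antisymm h3 (le_trans h2 h1),
         le_antisymm (le_trans h3 h2) h1⟩
end

section
/- Let Q be a based groupoid quantale over a frame A, and let X be a stably supported Q-module. Then the support ς_X is A-equivariant: for every a ∈ A and x ∈ X one has ς_X(a▹x) = a ∧ ς_X(x). -/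
private lemma mono_of_sSup' {α β : Type*} [CompleteLattice α] [CompleteLattice β]
    (f : α → β) (h : ∀ S : Set α, f (sSup S) = ⨆ a ∈ S, f a) : Monotone f := by
  intro x y hxy
  have h2 := h {x, y}
  rw [sSup_pair, sup_eq_right.mpr hxy, iSup_pair] at h2
  calc f x ≤ f x ⊔ f y := le_sup_left
    _ = f y := h2.symm

/-- Theorem 4.1 (second assertion): the support of a stably supported
`Q`-module is `A`-equivariant: `ς_X(a▹x) = a ∧ ς_X(x)`. -/
theorem stably_supported_supp_equivariant {A Q X : Type*}
    [Order.Frame A] [Order.Frame Q] [Order.Frame X]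
    (GQ : BasedGroupoidQuantale A Q) (M : PreHilbertModule GQ X)
    (hQ_stable : ∀ p q : Q, GQ.suppQ (GQ.mul p q) ≤ GQ.suppQ p)
    (ς : X → A) (hmono : Monotone ς) (hς_top : ς ⊤ = ⊤)
    (hς_le : ∀ x, M.lres (ς x) ⊤ ≤ M.smul (M.inner x x) ⊤)
    (hς_restrict : ∀ x, M.lres (ς x) x = x)
    (hς_stable : ∀ (q : Q) (x : X), ς (M.smul q x) ≤ GQ.suppQ q) :
    ∀ (a : A) (x : X), ς (M.lres a x) = a ⊓ ς x := by
  -- monotonicity helpers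
  have mlresX2 : ∀ a : A, Monotone (M.lres a) := fun a =>
    mono_of_sSup' _ (M.lres_sSup_right a)
  have mlresX1 : ∀ x : X, Monotone (fun a : A => M.lres a x) := fun x =>
    mono_of_sSup' _ (fun S => M.lres_sSup_left S x)
  have msupp : Monotone GQ.suppQ := mono_of_sSup' _ GQ.suppQ_sSup
  have mstar : Monotone GQ.star := mono_of_sSup' _ GQ.star_sSup
  have minner1 : ∀ y : X, Monotone (fun x : X => M.inner x y) := fun y =>
    mono_of_sSup' _ (fun S => M.inner_sSup S y)
  -- x ≤ ⟨x,x⟩·⊤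
  have hx_le : ∀ x : X, x ≤ M.smul (M.inner x x) ⊤ := by
    intro x
    calc x = M.lres (ς x) x := (hς_restrict x).symm
      _ ≤ M.lres (ς x) ⊤ := mlresX2 _ le_top
      _ ≤ M.smul (M.inner x x) ⊤ := hς_le x
  have htopeq : M.smul (M.inner (⊤ : X) ⊤) ⊤ = ⊤ :=
    le_antisymm le_top (hx_le ⊤)
  have hsupp_top : GQ.suppQ (M.inner (⊤ : X) ⊤) = ⊤ := by
    have h := hς_stable (M.inner (⊤ : X) ⊤) ⊤
    rw [htopeq, hς_top] at h
    exact le_antisymm le_top h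
  have hinner_le : ∀ x : X, M.inner x x ≤ M.inner x ⊤ := by
    intro x
    calc M.inner x x = GQ.star (M.inner x x) := M.inner_star x x
      _ ≤ GQ.star (M.inner ⊤ x) := mstar (minner1 x le_top)
      _ = M.inner x ⊤ := (M.inner_star x ⊤).symm
  have hsx_le : ∀ x : X, ς x ≤ GQ.suppQ (M.inner x ⊤) := by
    intro x
    have h1 : GQ.lres (ς x) (M.inner (⊤ : X) ⊤) ≤ GQ.mul (M.inner x x) (M.inner ⊤ ⊤) := by
      calc GQ.lres (ς x) (M.inner (⊤ : X) ⊤) = M.inner (M.lres (ς x) ⊤) ⊤ :=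
            M.lres_inner (ς x) ⊤
        _ ≤ M.inner (M.smul (M.inner x x) ⊤) ⊤ := minner1 ⊤ (hς_le x)
        _ = GQ.mul (M.inner x x) (M.inner ⊤ ⊤) := M.inner_smul _ _ _
    have h2 : ς x ≤ GQ.suppQ (M.inner x x) := by
      calc ς x = ς x ⊓ GQ.suppQ (M.inner (⊤ : X) ⊤) := by rw [hsupp_top, inf_top_eq]
        _ = GQ.suppQ (GQ.lres (ς x) (M.inner (⊤ : X) ⊤)) :=
            (GQ.suppQ_equivariant _ _).symm
        _ ≤ GQ.suppQ (GQ.mul (M.inner x x) (M.inner ⊤ ⊤)) := msupp h1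
        _ ≤ GQ.suppQ (M.inner x x) := hQ_stable _ _
    exact h2.trans (msupp (hinner_le x))
  intro a x
  have hax_le_x : M.lres a x ≤ x := by
    calc M.lres a x ≤ M.lres ⊤ x := mlresX1 x le_top
      _ = x := M.lres_top_act x
  have hle_x : ς (M.lres a x) ≤ ς x := hmono hax_le_x
  have hle_a : ς (M.lres a x) ≤ a := by
    have h1 : M.lres a x ≤ M.smul (GQ.lres a (M.inner x x)) ⊤ := by
      calc M.lres a x ≤ M.lres a (M.smul (M.inner x x) ⊤) := mlresX2 a (hx_le x)
        _ = M.smul (GQ.lres a (M.inner x x)) ⊤ := (M.lresQ_smul _ _ _).symm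
    calc ς (M.lres a x) ≤ ς (M.smul (GQ.lres a (M.inner x x)) ⊤) := hmono h1
      _ ≤ GQ.suppQ (GQ.lres a (M.inner x x)) := hς_stable _ _
      _ = a ⊓ GQ.suppQ (M.inner x x) := GQ.suppQ_equivariant _ _
      _ ≤ a := inf_le_left
  set c := ς (M.lres a x) ⊓ a with hc_def
  have hc : M.lres c x = M.lres a x := by
    rw [hc_def, ← M.lres_lres, hς_restrict]
  have hinner_eq : GQ.lres a (M.inner x ⊤) = GQ.lres c (M.inner x ⊤) := by
    rw [M.lres_inner, M.lres_inner, hc]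
  have key : a ⊓ GQ.suppQ (M.inner x ⊤) ≤ ς (M.lres a x) := by
    calc a ⊓ GQ.suppQ (M.inner x ⊤) = GQ.suppQ (GQ.lres a (M.inner x ⊤)) :=
          (GQ.suppQ_equivariant _ _).symm
      _ = GQ.suppQ (GQ.lres c (M.inner x ⊤)) := by rw [hinner_eq]
      _ = c ⊓ GQ.suppQ (M.inner x ⊤) := GQ.suppQ_equivariant _ _
      _ ≤ c := inf_le_left
      _ ≤ ς (M.lres a x) := inf_le_left
  have hge : a ⊓ ς x ≤ ς (M.lres a x) :=
    (inf_le_inf_left a (hsx_le x)).trans key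
  exact le_antisymm (le_inf hle_a hle_x) hge
end

section
/- Let Q be a based groupoid quantale over a frame A, and let X be a stably supported Q-module. Then for every x ∈ X and every q ∈ Q one has ς_X(x)▹q = (⟨x,x⟩·1_Q) ∧ q. -/
private lemma mono_of_sSup_eq {α β : Type*} [CompleteLattice α] [CompleteLattice β]
    (f : α → β) (hf : ∀ S : Set α, f (sSup S) = ⨆ a ∈ S, f a) : Monotone f := by
  intro a b hab
  have h := hf {a, b}
  rw [sSup_pair, sup_eq_right.mpr hab] at h
  rw [h]
  exact le_iSup₂ (f := fun c _ => f c) a (by simp)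

/-- Corollary 4.2: for a stably supported `Q`-module `X`,
`ς_X(x)▹q = ⟨x,x⟩1_Q ∧ q` for every `x ∈ X` and `q ∈ Q`. -/
theorem stably_supported_lres_suppX {A Q X : Type*}
    [Order.Frame A] [Order.Frame Q] [Order.Frame X]
    (GQ : BasedGroupoidQuantale A Q) (M : PreHilbertModule GQ X)
    (hQ_stable : ∀ p q : Q, GQ.suppQ (GQ.mul p q) ≤ GQ.suppQ p)
    (hQ_lres_top : ∀ q : Q, GQ.lres (GQ.suppQ q) ⊤ = GQ.mul q ⊤)
    (ς : X → A) (hmono : Monotone ς) (hς_top : ς ⊤ = ⊤)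
    (hς_le : ∀ x, M.lres (ς x) ⊤ ≤ M.smul (M.inner x x) ⊤)
    (hς_restrict : ∀ x, M.lres (ς x) x = x)
    (hς_stable : ∀ (q : Q) (x : X), ς (M.smul q x) ≤ GQ.suppQ q) :
    ∀ (x : X) (q : Q), GQ.lres (ς x) q = GQ.mul (M.inner x x) ⊤ ⊓ q := by
  intro x q
  -- monotonicity facts
  have lresA_mono : ∀ p : Q, Monotone (fun a : A => GQ.lres a p) :=
    fun p => mono_of_sSup_eq _ (fun S => GQ.lres_sSup_left S p)
  have lresQ_mono : ∀ a : A, Monotone (GQ.lres a) :=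
    fun a => mono_of_sSup_eq _ (fun S => GQ.lres_sSup_right a S)
  have mul_mono : ∀ p : Q, Monotone (fun r : Q => GQ.mul r p) :=
    fun p => mono_of_sSup_eq _ (fun S => GQ.mul_sSup_left S p)
  have star_mono : Monotone GQ.star := mono_of_sSup_eq _ GQ.star_sSup
  have Mlres_mono : ∀ a : A, Monotone (M.lres a) :=
    fun a => mono_of_sSup_eq _ (fun S => M.lres_sSup_right a S)
  have inner_mono : ∀ y : X, Monotone (fun z : X => M.inner z y) :=
    fun y => mono_of_sSup_eq _ (fun S => M.inner_sSup S y)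
  -- ς x ≤ ς_Q ⟨x,x⟩
  have h1 : ς x ≤ GQ.suppQ (M.inner x x) := by
    have h2 : x ≤ M.lres (ς x) ⊤ := by
      conv_lhs => rw [← hς_restrict x]
      exact Mlres_mono (ς x) le_top
    calc ς x ≤ ς (M.lres (ς x) ⊤) := hmono h2
      _ ≤ ς (M.smul (M.inner x x) ⊤) := hmono (hς_le x)
      _ ≤ GQ.suppQ (M.inner x x) := hς_stable _ _
  -- key: ς(x)▹⊤ = ⟨x,x⟩·⊤
  have key : GQ.lres (ς x) ⊤ = GQ.mul (M.inner x x) ⊤ := by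
    apply le_antisymm
    · calc GQ.lres (ς x) ⊤ ≤ GQ.lres (GQ.suppQ (M.inner x x)) ⊤ := lresA_mono ⊤ h1
        _ = GQ.mul (M.inner x x) ⊤ := hQ_lres_top _
    · have hxx : M.inner x x ≤ M.inner x ⊤ := by
        rw [M.inner_star x x, M.inner_star x ⊤]
        exact star_mono (inner_mono x le_top)
      have hxt : M.inner x ⊤ = GQ.lres (ς x) (M.inner x ⊤) := by
        conv_lhs => rw [← hς_restrict x]
        rw [← M.lres_inner]
      calc GQ.mul (M.inner x x) ⊤ ≤ GQ.mul (M.inner x ⊤) ⊤ := mul_mono ⊤ hxx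
        _ = GQ.mul (GQ.lres (ς x) (M.inner x ⊤)) ⊤ := by rw [← hxt]
        _ = GQ.lres (ς x) (GQ.mul (M.inner x ⊤) ⊤) := GQ.lres_mul _ _ _
        _ ≤ GQ.lres (ς x) ⊤ := lresQ_mono _ le_top
  calc GQ.lres (ς x) q = GQ.lres (ς x) (⊤ ⊓ q) := by rw [top_inf_eq]
    _ = GQ.lres (ς x) ⊤ ⊓ q := (GQ.lres_inf _ _ _).symm
    _ = GQ.mul (M.inner x x) ⊤ ⊓ q := by rw [key]
end

section
/- Let Q be a based groupoid quantale over a frame A, and let X be a stably supported Q-module. Then the map A → X, a ↦ a▹1_X, is right adjoint to ς_X : X → A; that is, for all x ∈ X and a ∈ A one has ς_X(x) ≤ a if and only if x ≤ a▹1_X. In particular, ς_X preserves arbitrary suprema. -/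
lemma monotone_of_sSup_eq {α β : Type*} [CompleteLattice α] [CompleteLattice β]
    (f : α → β) (h : ∀ S : Set α, f (sSup S) = ⨆ x ∈ S, f x) : Monotone f := by
  intro a b hab
  have hb : b = sSup {a, b} := by simp [sSup_pair, sup_eq_right.2 hab]
  rw [hb, h]
  exact le_biSup f (by simp)

/-- Lemma 4.3: for a stably supported `Q`-module `X`, the map `a ↦ a▹1_X` is
right adjoint to `ς_X : X → A`; in particular `ς_X` preserves arbitrary
suprema. -/
theorem stably_supported_supp_adjoint {A Q X : Type*}
    [Order.Frame A] [Order.Frame Q] [Order.Frame X]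
    (GQ : BasedGroupoidQuantale A Q) (M : PreHilbertModule GQ X)
    (hQ_stable : ∀ p q : Q, GQ.suppQ (GQ.mul p q) ≤ GQ.suppQ p)
    (ς : X → A) (hmono : Monotone ς) (hς_top : ς ⊤ = ⊤)
    (hς_le : ∀ x, M.lres (ς x) ⊤ ≤ M.smul (M.inner x x) ⊤)
    (hς_restrict : ∀ x, M.lres (ς x) x = x)
    (hς_stable : ∀ (q : Q) (x : X), ς (M.smul q x) ≤ GQ.suppQ q) :
    (∀ (x : X) (a : A), ς x ≤ a ↔ x ≤ M.lres a ⊤) ∧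
      (∀ S : Set X, ς (sSup S) = ⨆ x ∈ S, ς x) := by
  -- monotonicity helpers
  have mlres2 : ∀ a : A, Monotone (M.lres a) :=
    fun a => monotone_of_sSup_eq _ (fun S => M.lres_sSup_right a S)
  have mlres1 : Monotone (fun a : A => M.lres a ⊤) :=
    monotone_of_sSup_eq _ (fun S => M.lres_sSup_left S ⊤)
  have msuppQ : Monotone GQ.suppQ := monotone_of_sSup_eq _ GQ.suppQ_sSup
  have mstar : Monotone GQ.star := monotone_of_sSup_eq _ GQ.star_sSup
  have minner1 : ∀ y : X, Monotone (fun x => M.inner x y) :=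
    fun y => monotone_of_sSup_eq _ (fun S => M.inner_sSup S y)
  have minner2 : ∀ x : X, Monotone (M.inner x) := by
    intro x y y' hy
    rw [M.inner_star x y, M.inner_star x y']
    exact mstar (minner1 x hy)
  have key : ∀ (x : X) (a : A), ς x ≤ a ↔ x ≤ M.lres a ⊤ := by
    intro x a
    constructor
    · intro h
      calc x = M.lres (ς x) x := (hς_restrict x).symm
        _ ≤ M.lres (ς x) ⊤ := mlres2 _ le_top
        _ ≤ M.lres a ⊤ := mlres1 h
    · intro h
      have hx : x ≤ M.smul (M.inner x x) ⊤ := by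
        calc x = M.lres (ς x) x := (hς_restrict x).symm
          _ ≤ M.lres (ς x) ⊤ := mlres2 _ le_top
          _ ≤ M.smul (M.inner x x) ⊤ := hς_le x
      have h1 : ς x ≤ GQ.suppQ (M.inner x x) :=
        le_trans (hmono hx) (hς_stable _ ⊤)
      have h2 : M.inner x x ≤ M.inner x ⊤ := minner2 x le_top
      have h3 : M.inner x ⊤ ≤ M.inner (M.lres a ⊤) ⊤ := minner1 ⊤ h
      have h4 : M.inner (M.lres a ⊤) ⊤ = GQ.lres a (M.inner ⊤ ⊤) :=
        (M.lres_inner a ⊤).symm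
      calc ς x ≤ GQ.suppQ (M.inner x x) := h1
        _ ≤ GQ.suppQ (GQ.lres a (M.inner ⊤ ⊤)) := msuppQ (le_trans h2 (h4 ▸ h3))
        _ = a ⊓ GQ.suppQ (M.inner ⊤ ⊤) := GQ.suppQ_equivariant a _
        _ ≤ a := inf_le_left
  refine ⟨key, fun S => le_antisymm ?_ ?_⟩
  · rw [key]
    refine sSup_le fun x hx => ?_
    calc x ≤ M.lres (ς x) ⊤ := (key x (ς x)).1 le_rfl
      _ ≤ M.lres (⨆ y ∈ S, ς y) ⊤ := mlres1 (le_biSup _ hx)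
  · exact iSup_le fun x => iSup_le fun hx => hmono (le_sSup hx)
end

section
/- Let Q be a based groupoid quantale over a frame A, and let X be a pre-Hilbert Q-module. If ς and ς′ are two monotone maps X → A each making X a stably supported Q-module (i.e., each satisfies ς(1_X) = 1_A, ς(x)▹1_X ≤ ⟨x,x⟩·1_X, ς(x)▹x = x, and ς(q·x) ≤ ς_Q(q) for all q ∈ Q, x ∈ X, and likewise for ς′), then ς = ς′. In other words, a stable support on a pre-Hilbert Q-module is unique. -/
private lemma support_formula {A Q X : Type*}
    [Order.Frame A] [Order.Frame Q] [Order.Frame X]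
    (GQ : BasedGroupoidQuantale A Q) (M : PreHilbertModule GQ X)
    (ς : X → A)
    (hmono : Monotone ς)
    (hς_le : ∀ x, M.lres (ς x) ⊤ ≤ M.smul (M.inner x x) ⊤)
    (hς_restrict : ∀ x, M.lres (ς x) x = x)
    (hς_stable : ∀ (q : Q) (x : X), ς (M.smul q x) ≤ GQ.suppQ q) :
    ∀ x, ς x = GQ.suppQ (M.inner x ⊤) := by
  have hsuppQ_mono : Monotone GQ.suppQ := mono_of_sSup' _ GQ.suppQ_sSup
  have hlres_mono : ∀ a : A, Monotone (M.lres a) :=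
    fun a => mono_of_sSup' _ (M.lres_sSup_right a)
  have hstar_mono : Monotone GQ.star := mono_of_sSup' _ GQ.star_sSup
  have hinner_mono1 : ∀ y : X, Monotone (fun x => M.inner x y) :=
    fun y => mono_of_sSup' _ (fun S => M.inner_sSup S y)
  intro x
  apply le_antisymm
  · -- ς x ≤ ς_Q ⟨x, ⊤⟩
    have h1 : x ≤ M.lres (ς x) ⊤ := by
      calc x = M.lres (ς x) x := (hς_restrict x).symm
        _ ≤ M.lres (ς x) ⊤ := hlres_mono _ le_top
    have h2 : ς x ≤ ς (M.smul (M.inner x x) ⊤) :=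
      le_trans (hmono h1) (hmono (hς_le x))
    have h3 : ς (M.smul (M.inner x x) ⊤) ≤ GQ.suppQ (M.inner x x) :=
      hς_stable _ _
    have h4 : M.inner x x ≤ M.inner x ⊤ := by
      rw [M.inner_star x x, M.inner_star x ⊤]
      exact hstar_mono (hinner_mono1 x le_top)
    exact le_trans h2 (le_trans h3 (hsuppQ_mono h4))
  · -- ς_Q ⟨x, ⊤⟩ ≤ ς x
    have h1 : GQ.suppQ (M.inner x ⊤) = ς x ⊓ GQ.suppQ (M.inner x ⊤) := by
      conv_lhs => rw [← hς_restrict x, ← M.lres_inner, GQ.suppQ_equivariant]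
    rw [h1]
    exact inf_le_left

/-- Lemma 4.3 (uniqueness): a stable support on a pre-Hilbert `Q`-module is
unique; the existence of a stable support is a property rather than extra
structure. -/
theorem stable_support_unique {A Q X : Type*}
    [Order.Frame A] [Order.Frame Q] [Order.Frame X]
    (GQ : BasedGroupoidQuantale A Q) (M : PreHilbertModule GQ X)
    (hQ_stable : ∀ p q : Q, GQ.suppQ (GQ.mul p q) ≤ GQ.suppQ p)
    (ς ς' : X → A)
    (hmono : Monotone ς) (hς_top : ς ⊤ = ⊤)
    (hς_le : ∀ x, M.lres (ς x) ⊤ ≤ M.smul (M.inner x x) ⊤)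
    (hς_restrict : ∀ x, M.lres (ς x) x = x)
    (hς_stable : ∀ (q : Q) (x : X), ς (M.smul q x) ≤ GQ.suppQ q)
    (hmono' : Monotone ς') (hς'_top : ς' ⊤ = ⊤)
    (hς'_le : ∀ x, M.lres (ς' x) ⊤ ≤ M.smul (M.inner x x) ⊤)
    (hς'_restrict : ∀ x, M.lres (ς' x) x = x)
    (hς'_stable : ∀ (q : Q) (x : X), ς' (M.smul q x) ≤ GQ.suppQ q) :
    ς = ς' := by
  funext x
  rw [support_formula GQ M ς hmono hς_le hς_restrict hς_stable x,
      support_formula GQ M ς' hmono' hς'_le hς'_restrict hς'_stable x]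
end

section
/- Let Q be a based groupoid quantale over a frame A, and let X be a stably supported Q-module. Suppose x ∈ X and b ∈ A satisfy: (1) b▹1_X ≤ ⟨x,x⟩·1_X, and (2) b▹x = x. Then b = ς_X(x). -/
section Aux

variable {A Q X : Type*} [Order.Frame A] [Order.Frame Q] [Order.Frame X]

theorem BasedGroupoidQuantale.suppQ_mono (GQ : BasedGroupoidQuantale A Q) :
    Monotone GQ.suppQ := by
  intro p q h
  have hs := GQ.suppQ_sSup {p, q}
  rw [sSup_pair, sup_eq_right.mpr h] at hs
  rw [hs]
  simp only [iSup_pair]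
  exact le_sup_left

theorem BasedGroupoidQuantale.star_mono (GQ : BasedGroupoidQuantale A Q) :
    Monotone GQ.star := by
  intro p q h
  have hs := GQ.star_sSup {p, q}
  rw [sSup_pair, sup_eq_right.mpr h] at hs
  rw [hs]
  simp only [iSup_pair]
  exact le_sup_left

theorem PreHilbertModule.inner_mono_left {GQ : BasedGroupoidQuantale A Q}
    (M : PreHilbertModule GQ X) {x y : X} (h : x ≤ y) (z : X) :
    M.inner x z ≤ M.inner y z := by
  have hs := M.inner_sSup {x, y} z
  rw [sSup_pair, sup_eq_right.mpr h] at hs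
  rw [hs]
  simp only [iSup_pair]
  exact le_sup_left

end Aux

/-- Lemma 4.4: in a stably supported `Q`-module, if `b▹1_X ≤ ⟨x,x⟩·1_X` and
`b▹x = x`, then `b = ς_X(x)`. -/
theorem stably_supported_supp_characterization {A Q X : Type*}
    [Order.Frame A] [Order.Frame Q] [Order.Frame X]
    (GQ : BasedGroupoidQuantale A Q) (M : PreHilbertModule GQ X)
    (hQ_stable : ∀ p q : Q, GQ.suppQ (GQ.mul p q) ≤ GQ.suppQ p)
    (ς : X → A) (hmono : Monotone ς) (hς_top : ς ⊤ = ⊤)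
    (hς_le : ∀ x, M.lres (ς x) ⊤ ≤ M.smul (M.inner x x) ⊤)
    (hς_restrict : ∀ x, M.lres (ς x) x = x)
    (hς_stable : ∀ (q : Q) (x : X), ς (M.smul q x) ≤ GQ.suppQ q)
    (x : X) (b : A)
    (h1 : M.lres b ⊤ ≤ M.smul (M.inner x x) ⊤)
    (h2 : M.lres b x = x) :
    b = ς x := by
  -- Step A: `⟨⊤,⊤⟩·⊤ = ⊤` and `ς_Q⟨⊤,⊤⟩ = ⊤`.
  have htopsmul : M.smul (M.inner ⊤ ⊤) ⊤ = ⊤ := by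
    refine top_le_iff.mp ?_
    have := hς_le (⊤ : X)
    rwa [hς_top, M.lres_top_act] at this
  have hsuppTT : GQ.suppQ (M.inner ⊤ ⊤) = ⊤ := by
    refine top_le_iff.mp ?_
    have := hς_stable (M.inner ⊤ ⊤) ⊤
    rwa [htopsmul, hς_top] at this
  -- Step C: `⟨x,x⟩ ≤ ⟨x,⊤⟩`.
  have hxx_le : M.inner x x ≤ M.inner x ⊤ := by
    have h' : M.inner x x ≤ M.inner ⊤ x := M.inner_mono_left le_top x
    calc M.inner x x = GQ.star (M.inner x x) := M.inner_star x x
      _ ≤ GQ.star (M.inner ⊤ x) := GQ.star_mono h'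
      _ = M.inner x ⊤ := (M.inner_star x ⊤).symm
  -- Key claim: any `c` satisfying both conditions equals `ς_Q⟨x,⊤⟩`.
  have key : ∀ c : A, M.lres c ⊤ ≤ M.smul (M.inner x x) ⊤ → M.lres c x = x →
      c = GQ.suppQ (M.inner x ⊤) := by
    intro c hA hB
    -- Step B: `c ≤ ς_Q⟨x,x⟩`.
    have hcle : c ≤ GQ.suppQ (M.inner x x) := by
      have h' : M.inner (M.lres c ⊤) ⊤ ≤ M.inner (M.smul (M.inner x x) ⊤) ⊤ :=
        M.inner_mono_left hA ⊤
      rw [← M.lres_inner, M.inner_smul] at h'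
      have h'' := GQ.suppQ_mono h'
      rw [GQ.suppQ_equivariant, hsuppTT, inf_top_eq] at h''
      exact le_trans h'' (hQ_stable _ _)
    -- Step D: `ς_Q⟨x,⊤⟩ ≤ c`.
    have hge : GQ.suppQ (M.inner x ⊤) ≤ c := by
      have hx : M.inner x ⊤ = GQ.lres c (M.inner x ⊤) := by
        rw [M.lres_inner, hB]
      calc GQ.suppQ (M.inner x ⊤) = GQ.suppQ (GQ.lres c (M.inner x ⊤)) := by rw [← hx]
        _ = c ⊓ GQ.suppQ (M.inner x ⊤) := GQ.suppQ_equivariant c _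
        _ ≤ c := inf_le_left
    exact le_antisymm (le_trans hcle (GQ.suppQ_mono hxx_le)) hge
  rw [key b h1 h2, key (ς x) (hς_le x) (hς_restrict x)]
end
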